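/- Let a, b, c be pairwise distinct real numbers and let α, β, γ all be nonzero. Suppose (x,y,z) ∈ ℝ³ is such that F_{α,β,γ}(x,y,z) has rank at most 1, and suppose q ∈ ℝ² satisfies q · F_{α,β,γ}(x,y,z) = 0 (row-vector times matrix), k ∈ ℝ³ satisfies F_{α,β,γ}(x,y,z) · k = 0 (matrix times column vector), and for every v = (v₁,v₂,v₃) ∈ ℝ³ one has q · M(v) · k = 0, where M(v) is the 2×3 matrix with first row (2a v₁, 2b v₂, 2c v₃) and second row (v₁, v₂, v₃). Then q = 0 or k = 0. (I.e., the map μ ↦ F_{α,β,γ}(μ) is transverse to the variety of matrices of rank at most 1 at every point of R_{α,β,γ}.) -/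
import Mathlib


open Matrix

lemma blk_aux (a b c α x q0 q1 k0 k1 k2 B C D E : ℝ)
    (hab : a ≠ b) (hac : a ≠ c) (hα : α ≠ 0) (h0 : q0 ≠ 0)
    (t1 : q0*(2*a)+q1 = 0 ∨ k0 = 0) (t2 : q0*(2*b)+q1 = 0 ∨ k1 = 0)
    (t3 : q0*(2*c)+q1 = 0 ∨ k2 = 0)
    (f1 : (2*a*x+α)*k0 + (B*k1 + C*k2) = 0) (f2 : x*k0 + (D*k1 + E*k2) = 0) :
    k0 = 0 := by
  rcases t1 with h1 | h1
  · have hk1 : k1 = 0 := by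
      rcases t2 with h2 | h2
      · exfalso
        apply hab
        have h : q0*(2*a) = q0*(2*b) := by linarith
        have := mul_left_cancel₀ h0 h
        linarith
      · exact h2
    have hk2 : k2 = 0 := by
      rcases t3 with h3 | h3
      · exfalso
        apply hac
        have h : q0*(2*a) = q0*(2*c) := by linarith
        have := mul_left_cancel₀ h0 h
        linarith
      · exact h3
    rw [hk1, hk2] at f1 f2
    simp only [mul_zero, add_zero, zero_add] at f1 f2
    rcases mul_eq_zero.mp f1 with h | h
    · rcases mul_eq_zero.mp f2 with h' | h'
      · exfalso; apply hα; rw [h'] at h; linarith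
      · exact h'
    · exact h
  · exact h1

/-- For pairwise distinct `a b c` and `α β γ` all nonzero, the map
`μ ↦ F_{α,β,γ}(μ)` is transverse to the rank-≤1 variety at every point of
`R_{α,β,γ}`: if `q` is in the left kernel of `F`, `k` in the kernel of `F`, and
`q ⬝ M(v) ⬝ k = 0` for all directions `v`, then `q = 0` or `k = 0`. -/
theorem stmt_8 (a b c α β γ x y z : ℝ) (hab : a ≠ b) (hbc : b ≠ c) (hac : a ≠ c)
    (hα : α ≠ 0) (hβ : β ≠ 0) (hγ : γ ≠ 0)
    (hrank : (!![2*a*x + α, 2*b*y + β, 2*c*z + γ; x, y, z] :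
        Matrix (Fin 2) (Fin 3) ℝ).rank ≤ 1)
    (q : Fin 2 → ℝ) (k : Fin 3 → ℝ)
    (hq : q ᵥ* (!![2*a*x + α, 2*b*y + β, 2*c*z + γ; x, y, z] :
        Matrix (Fin 2) (Fin 3) ℝ) = 0)
    (hk : (!![2*a*x + α, 2*b*y + β, 2*c*z + γ; x, y, z] :
        Matrix (Fin 2) (Fin 3) ℝ) *ᵥ k = 0)
    (htang : ∀ v : Fin 3 → ℝ,
      (q ᵥ* (!![2*a*(v 0), 2*b*(v 1), 2*c*(v 2); v 0, v 1, v 2] :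
        Matrix (Fin 2) (Fin 3) ℝ)) ⬝ᵥ k = 0) :
    q = 0 ∨ k = 0 := by
  have f1 := congrFun hk 0
  have f2 := congrFun hk 1
  have t1 := htang ![1,0,0]
  have t2 := htang ![0,1,0]
  have t3 := htang ![0,0,1]
  simp [vecMul, mulVec, dotProduct, Fin.sum_univ_succ] at f1 f2 t1 t2 t3
  by_cases h0 : q 0 = 0
  · by_cases h1 : q 1 = 0
    · left
      funext i
      fin_cases i <;> simpa
    · right
      have hk0 : k 0 = 0 := by
        rcases t1 with h | h
        · exfalso; apply h1; rw [h0] at h; linarith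
        · exact h
      have hk1 : k 1 = 0 := by
        rcases t2 with h | h
        · exfalso; apply h1; rw [h0] at h; linarith
        · exact h
      have hk2 : k 2 = 0 := by
        rcases t3 with h | h
        · exfalso; apply h1; rw [h0] at h; linarith
        · exact h
      funext i
      fin_cases i <;> simpa
  · right
    have hk0 : k 0 = 0 :=
      blk_aux a b c α x (q 0) (q 1) (k 0) (k 1) (k 2)
        (2*b*y + β) (2*c*z + γ) y z hab hac hα h0 t1 t2 t3
        (by linarith) (by linarith)
    have hk1 : k 1 = 0 :=
      blk_aux b a c β y (q 0) (q 1) (k 1) (k 0) (k 2)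
        (2*a*x + α) (2*c*z + γ) x z (Ne.symm hab) hbc hβ h0 t2 t1 t3
        (by linarith) (by linarith)
    have hk2 : k 2 = 0 :=
      blk_aux c a b γ z (q 0) (q 1) (k 2) (k 0) (k 1)
        (2*a*x + α) (2*b*y + β) x y (Ne.symm hac) (Ne.symm hbc) hγ h0 t3 t1 t2
        (by linarith) (by linarith)
    funext i
    fin_cases i <;> simpa
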